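/- Let f(θ) = ⟨ψ| e^{iθG} A e^{-iθG} |ψ⟩ with G² = r²I. Then for any h > 0, the bias of the centered finite-difference estimator equals [f(θ+h) - f(θ-h)]/(2h) - f'(θ) = (sin(2rh)/(2rh) - 1)·f'(θ). -/

import Mathlib

open Matrix
open scoped Nat

lemma expG_formula {n : ℕ} (G : Matrix (Fin n) (Fin n) ℂ) (r : ℝ) (hr : 0 < r)
    (hG2 : G * G = ((r : ℂ) ^ 2) • (1 : Matrix (Fin n) (Fin n) ℂ)) (x : ℝ) :
    NormedSpace.exp ((Complex.I * (x : ℂ)) • G)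
      = ((Real.cos (r * x) : ℂ)) • (1 : Matrix (Fin n) (Fin n) ℂ)
        + (((Real.sin (r * x) / r : ℝ) : ℂ) * Complex.I) • G := by
  rcases eq_or_ne x 0 with rfl | hx
  · simp [NormedSpace.exp_zero]
  set u : Matrix (Fin n) (Fin n) ℂ := (Complex.I * (x : ℂ)) • G with hu
  set a : ℂ := ((r * x : ℝ) : ℂ) with ha
  have ha0 : a ≠ 0 := by
    simp [ha, hr.ne', hx]
  have hx' : (x : ℂ) ≠ 0 := Complex.ofReal_ne_zero.mpr hx
  have hr' : (r : ℂ) ≠ 0 := Complex.ofReal_ne_zero.mpr hr.ne'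
  have hu2 : u * u = (-(a ^ 2)) • (1 : Matrix (Fin n) (Fin n) ℂ) := by
    rw [hu, smul_mul_assoc, mul_smul_comm, hG2, smul_smul, smul_smul]
    rw [ha]
    push_cast
    ring_nf
    rw [Complex.I_sq]
    ring
  have hupow_even : ∀ k : ℕ, u ^ (2 * k) = ((-(a ^ 2)) ^ k) • (1 : Matrix (Fin n) (Fin n) ℂ) := by
    intro k
    rw [pow_mul, sq, hu2, smul_pow, one_pow]
  have hupow_odd : ∀ k : ℕ, u ^ (2 * k + 1) = ((-(a ^ 2)) ^ k) • u := by
    intro k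
    rw [pow_succ, hupow_even, smul_mul_assoc, one_mul]
  have hpow : ∀ k : ℕ, a ^ (2 * k + 1) * a⁻¹ = a ^ (2 * k) := fun k => by
    rw [pow_succ, mul_assoc, mul_inv_cancel₀ ha0, mul_one]
  have hneg : ∀ k : ℕ, (-(a ^ 2)) ^ k = (-1) ^ k * a ^ (2 * k) := by
    intro k
    rw [neg_pow, ← pow_mul]
  have heven : HasSum (fun k : ℕ => ((((2 * k)! : ℂ))⁻¹) • u ^ (2 * k))
      ((Complex.cos a) • (1 : Matrix (Fin n) (Fin n) ℂ)) := by
    have := (Complex.hasSum_cos a).smul_const (1 : Matrix (Fin n) (Fin n) ℂ)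
    convert this using 2 with k
    rw [hupow_even, smul_smul, hneg]
    congr 1
    field_simp
  have hodd : HasSum (fun k : ℕ => ((((2 * k + 1)! : ℂ))⁻¹) • u ^ (2 * k + 1))
      ((Complex.sin a / a) • u) := by
    have := ((Complex.hasSum_sin a).div_const a).smul_const u
    convert this using 2 with k
    rw [hupow_odd, smul_smul, hneg]
    congr 1
    rw [← hpow k]
    simp only [div_eq_mul_inv, mul_inv]
    ring
  have hsum : HasSum (fun m : ℕ => ((m ! : ℂ))⁻¹ • u ^ m)
      ((Complex.cos a) • (1 : Matrix (Fin n) (Fin n) ℂ) + (Complex.sin a / a) • u) :=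
    HasSum.even_add_odd heven hodd
  have hexp : NormedSpace.exp u = Complex.cos a • (1 : Matrix (Fin n) (Fin n) ℂ)
      + (Complex.sin a / a) • u := by
    rw [NormedSpace.exp_eq_tsum (𝕂 := ℂ)]
    exact hsum.tsum_eq
  rw [hexp]
  congr 1
  · rw [ha, Complex.ofReal_cos]
  · rw [hu, smul_smul]
    congr 1
    rw [ha, ← Complex.ofReal_sin]
    push_cast
    rw [div_mul_eq_mul_div, div_mul_eq_mul_div, div_eq_div_iff (mul_ne_zero hr' hx') hr']
    ring
theorem stmt_7 {n : ℕ} (ψ : Fin n → ℂ) (hψ : star ψ ⬝ᵥ ψ = 1)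
    (A G : Matrix (Fin n) (Fin n) ℂ) (hA : A.IsHermitian) (hG : G.IsHermitian)
    (r : ℝ) (hr : 0 < r)
    (hG2 : G * G = ((r : ℂ) ^ 2) • (1 : Matrix (Fin n) (Fin n) ℂ))
    (f : ℝ → ℝ)
    (hf : ∀ θ : ℝ, f θ =
      (star ψ ⬝ᵥ ((NormedSpace.exp ((Complex.I * (θ : ℂ)) • G) * A *
        NormedSpace.exp ((-(Complex.I * (θ : ℂ))) • G)) *ᵥ ψ)).re) (θ : ℝ) (h : ℝ) (hh : 0 < h) :
    (f (θ + h) - f (θ - h)) / (2 * h) - deriv f θ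
      = (Real.sin (2 * r * h) / (2 * r * h) - 1) * deriv f θ := by
  set a : ℂ := star ψ ⬝ᵥ (A *ᵥ ψ) with hadef
  set b : ℂ := star ψ ⬝ᵥ ((A * G) *ᵥ ψ) with hbdef
  set b' : ℂ := star ψ ⬝ᵥ ((G * A) *ᵥ ψ) with hb'def
  set d : ℂ := star ψ ⬝ᵥ ((G * (A * G)) *ᵥ ψ) with hddef
  set A₁ : ℝ := a.re with hA1
  set D₁ : ℝ := d.re / r ^ 2 with hD1
  set Q : ℝ := (b.im - b'.im) / r with hQ
  have key : ∀ x : ℝ, f x = A₁ * Real.cos (r * x) ^ 2 + D₁ * Real.sin (r * x) ^ 2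
      + Q * (Real.sin (r * x) * Real.cos (r * x)) := by
    intro x
    have h1 := expG_formula G r hr hG2 x
    have h2 : NormedSpace.exp ((-(Complex.I * (x : ℂ))) • G)
        = ((Real.cos (r * x) : ℂ)) • (1 : Matrix (Fin n) (Fin n) ℂ)
          + (-(((Real.sin (r * x) / r : ℝ) : ℂ) * Complex.I)) • G := by
      have := expG_formula G r hr hG2 (-x)
      rw [show (Complex.I * ((-x : ℝ) : ℂ)) = -(Complex.I * (x : ℂ)) by push_cast; ring] at this
      rw [this]
      rw [mul_neg, Real.cos_neg, Real.sin_neg]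
      push_cast
      congr 2
      ring
    set c : ℂ := ((Real.cos (r * x) : ℝ) : ℂ) with hc
    set t : ℂ := ((Real.sin (r * x) / r : ℝ) : ℂ) * Complex.I with ht
    have hM : (NormedSpace.exp ((Complex.I * (x : ℂ)) • G) * A *
        NormedSpace.exp ((-(Complex.I * (x : ℂ))) • G))
        = (c * c) • A + (t * c) • (G * A) + (-(c * t)) • (A * G) + (-(t * t)) • (G * (A * G)) := by
      rw [h1, h2]
      simp only [Matrix.add_mul, Matrix.mul_add, smul_mul_assoc, mul_smul_comm, smul_smul,
        smul_add, smul_neg, neg_smul, Matrix.one_mul, Matrix.mul_one, mul_neg, neg_neg]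
      rw [Matrix.mul_assoc]
      module
    rw [hf x, hM]
    simp only [Matrix.add_mulVec, Matrix.smul_mulVec, Matrix.neg_mulVec,
      dotProduct_add, dotProduct_smul, dotProduct_neg, smul_eq_mul,
      ← hadef, ← hbdef, ← hb'def, ← hddef]
    rw [hc, ht, hA1, hD1, hQ]
    simp only [Complex.add_re, Complex.add_im, Complex.neg_re, Complex.neg_im,
      Complex.mul_re, Complex.mul_im, Complex.I_re, Complex.I_im,
      Complex.ofReal_re, Complex.ofReal_im]
    have hr' : r ≠ 0 := hr.ne'
    field_simp
    ring
  have f_eq : f = fun x => A₁ * Real.cos (r * x) ^ 2 + D₁ * Real.sin (r * x) ^ 2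
      + Q * (Real.sin (r * x) * Real.cos (r * x)) := funext key
  have hrx : HasDerivAt (fun x : ℝ => r * x) r θ := by
    simpa using (hasDerivAt_id θ).const_mul r
  have hcos : HasDerivAt (fun x : ℝ => Real.cos (r * x)) (-Real.sin (r * θ) * r) θ :=
    (Real.hasDerivAt_cos (r * θ)).comp θ hrx
  have hsin : HasDerivAt (fun x : ℝ => Real.sin (r * x)) (Real.cos (r * θ) * r) θ :=
    (Real.hasDerivAt_sin (r * θ)).comp θ hrx
  have hder : HasDerivAt f
      (A₁ * ((2 : ℕ) * Real.cos (r * θ) ^ 1 * (-Real.sin (r * θ) * r))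
        + D₁ * ((2 : ℕ) * Real.sin (r * θ) ^ 1 * (Real.cos (r * θ) * r))
        + Q * ((Real.cos (r * θ) * r) * Real.cos (r * θ)
            + Real.sin (r * θ) * (-Real.sin (r * θ) * r))) θ := by
    rw [f_eq]
    exact (((hcos.pow 2).const_mul A₁).add ((hsin.pow 2).const_mul D₁)).add
      ((hsin.mul hcos).const_mul Q)
  rw [hder.deriv]
  simp only [f_eq]
  have e1 : r * (θ + h) = r * θ + r * h := by ring
  have e2 : r * (θ - h) = r * θ - r * h := by ring
  have e3 : 2 * r * h = 2 * (r * h) := by ring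
  rw [e1, e2, e3, Real.cos_add, Real.sin_add, Real.cos_sub, Real.sin_sub, Real.sin_two_mul]
  have hh' : h ≠ 0 := hh.ne'
  have hr' : r ≠ 0 := hr.ne'
  field_simp
  ring
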